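/- Fix P ≤ 0. The function (λ, μ) ↦ G(P; λ, μ) is differentiable on (0,∞) × (0,∞) and satisfies the Callan–Symanzik scaling equation μ ∂G/∂μ(P; λ, μ) − 4λ ∂G/∂λ(P; λ, μ) = 0; that is, the propagator at the infrared trivial fixed point is compatible with the beta function β(λ) = 4λ. -/

import Mathlib

open Real

/-- The complete elliptic integral `K(i) = ∫₀^{π/2} dθ/√(1 + sin²θ)`. -/
noncomputable def Kell : ℝ := ∫ θ in (0:ℝ)..(π / 2), 1 / Real.sqrt (1 + Real.sin θ ^ 2)

/-- The residues `Bₙ = (2n+1)(π²/K²)(-1)ⁿ e^{-(n+1/2)π}/(1 + e^{-(2n+1)π})` of the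
exact infrared propagator. -/
noncomputable def B (n : ℕ) : ℝ :=
  (2 * (n : ℝ) + 1) * (π ^ 2 / Kell ^ 2) *
    ((-1 : ℝ) ^ n * Real.exp (-((n : ℝ) + 1 / 2) * π) /
      (1 + Real.exp (-(2 * (n : ℝ) + 1) * π)))

/-- The mass spectrum `mₙ = (n + 1/2)(π/K)(λ/2)^{1/4} μ`. -/
noncomputable def msp (lam μ : ℝ) (n : ℕ) : ℝ :=
  ((n : ℝ) + 1 / 2) * (π / Kell) * (lam / 2) ^ ((1 : ℝ) / 4) * μ

/-- The exact infrared propagator `G(P; λ, μ) = Σₙ Bₙ/(P - mₙ²)`. -/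
noncomputable def Gprop (P lam μ : ℝ) : ℝ := ∑' n : ℕ, B n / (P - msp lam μ n ^ 2)

lemma Kell_pos : 0 < Kell := by
  have hc : Continuous fun θ : ℝ => 1 / Real.sqrt (1 + Real.sin θ ^ 2) := by
    apply continuous_const.div
    · exact (continuous_const.add (Real.continuous_sin.pow 2)).sqrt
    · intro x
      have : (0:ℝ) < 1 + Real.sin x ^ 2 := by positivity
      exact (Real.sqrt_pos.mpr this).ne'
  refine intervalIntegral.intervalIntegral_pos_of_pos_on
    (hc.intervalIntegrable _ _) (fun x _ => ?_) (by positivity)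
  have : (0:ℝ) < 1 + Real.sin x ^ 2 := by positivity
  positivity

/-- Coefficient in the mass squared. -/
noncomputable def aCoef (n : ℕ) : ℝ := (((n : ℝ) + 1 / 2) * (π / Kell)) ^ 2

lemma piK_pos : 0 < π / Kell := div_pos Real.pi_pos Kell_pos

lemma aCoef_pos (n : ℕ) : 0 < aCoef n := by
  have h : 0 < ((n : ℝ) + 1 / 2) * (π / Kell) := by
    have := piK_pos
    have : (0:ℝ) < (n : ℝ) + 1 / 2 := by positivity
    have := piK_pos
    positivity
  exact pow_pos h 2

lemma aCoef_zero_le (n : ℕ) : aCoef 0 ≤ aCoef n := by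
  unfold aCoef
  have h1 : (0:ℝ) ≤ ((0:ℕ) : ℝ) + 1 / 2 := by norm_num
  have h2 : (((0:ℕ):ℝ) + 1 / 2) * (π / Kell) ≤ (((n:ℕ):ℝ) + 1 / 2) * (π / Kell) := by
    apply mul_le_mul_of_nonneg_right _ piK_pos.le
    have : (0:ℝ) ≤ (n : ℝ) := Nat.cast_nonneg n
    push_cast
    linarith
  have h3 : (0:ℝ) ≤ (((0:ℕ):ℝ) + 1 / 2) * (π / Kell) := by
    have := piK_pos; positivity
  exact pow_le_pow_left₀ h3 h2 2

lemma B_abs_le (n : ℕ) :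
    |B n| ≤ (π ^ 2 / Kell ^ 2) * Real.exp (-(π/2)) * ((2 * (n:ℝ) + 1) * Real.exp (-π) ^ n) := by
  have hden : (1:ℝ) ≤ 1 + Real.exp (-(2 * (n : ℝ) + 1) * π) := by
    have := Real.exp_pos (-(2 * (n : ℝ) + 1) * π); linarith
  have habs : |B n| = (2 * (n:ℝ) + 1) * (π ^ 2 / Kell ^ 2) *
      (Real.exp (-((n : ℝ) + 1 / 2) * π) / (1 + Real.exp (-(2 * (n : ℝ) + 1) * π))) := by
    unfold B
    have hK := Kell_pos
    have hπ := Real.pi_pos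
    have e1 : |(2 * (n:ℝ) + 1)| = 2 * (n:ℝ) + 1 := abs_of_pos (by positivity)
    have e2 : |π ^ 2 / Kell ^ 2| = π ^ 2 / Kell ^ 2 := abs_of_pos (by positivity)
    have e3 : |(-1:ℝ) ^ n * Real.exp (-((n:ℝ) + 1/2) * π) /
        (1 + Real.exp (-(2 * (n:ℝ) + 1) * π))| =
        Real.exp (-((n:ℝ) + 1/2) * π) / (1 + Real.exp (-(2 * (n:ℝ) + 1) * π)) := by
      rw [abs_div, abs_mul, abs_pow, abs_neg, abs_one, one_pow, one_mul,
        abs_of_pos (Real.exp_pos _),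
        abs_of_pos (show (0:ℝ) < 1 + Real.exp (-(2 * (n:ℝ) + 1) * π) by linarith)]
    rw [abs_mul, abs_mul, e1, e2, e3]
  rw [habs]
  have hexp : Real.exp (-((n : ℝ) + 1 / 2) * π) = Real.exp (-(π/2)) * Real.exp (-π) ^ n := by
    rw [← Real.exp_nat_mul, ← Real.exp_add]; ring_nf
  have hfrac : Real.exp (-((n : ℝ) + 1 / 2) * π) / (1 + Real.exp (-(2 * (n : ℝ) + 1) * π)) ≤
      Real.exp (-((n : ℝ) + 1 / 2) * π) := by
    apply div_le_self (Real.exp_pos _).le hden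
  calc (2 * (n:ℝ) + 1) * (π ^ 2 / Kell ^ 2) *
      (Real.exp (-((n : ℝ) + 1 / 2) * π) / (1 + Real.exp (-(2 * (n : ℝ) + 1) * π)))
      ≤ (2 * (n:ℝ) + 1) * (π ^ 2 / Kell ^ 2) * Real.exp (-((n : ℝ) + 1 / 2) * π) := by
        apply mul_le_mul_of_nonneg_left hfrac
        have := Kell_pos; have := Real.pi_pos; positivity
    _ = (π ^ 2 / Kell ^ 2) * Real.exp (-(π/2)) * ((2 * (n:ℝ) + 1) * Real.exp (-π) ^ n) := by
        rw [hexp]; ring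

lemma summable_bound :
    Summable (fun n : ℕ => (π ^ 2 / Kell ^ 2) * Real.exp (-(π/2)) *
      ((2 * (n:ℝ) + 1) * Real.exp (-π) ^ n)) := by
  apply Summable.mul_left
  have hr : ‖Real.exp (-π)‖ < 1 := by
    rw [Real.norm_eq_abs, abs_of_pos (Real.exp_pos _)]
    exact Real.exp_lt_one_iff.mpr (by linarith [Real.pi_pos])
  have h1 : Summable (fun n : ℕ => (n:ℝ) ^ 1 * Real.exp (-π) ^ n) :=
    summable_pow_mul_geometric_of_norm_lt_one 1 hr
  have h2 : Summable (fun n : ℕ => Real.exp (-π) ^ n) := summable_geometric_of_norm_lt_one hr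
  have := (h1.mul_left 2).add h2
  convert this using 2 with n
  ring

lemma B_summable : Summable (fun n : ℕ => |B n|) := by
  apply Summable.of_nonneg_of_le (fun n => abs_nonneg _) B_abs_le summable_bound

/-- The scaling variable. -/
noncomputable def Tmap (lam μ : ℝ) : ℝ := (lam / 2) ^ ((1:ℝ)/2) * μ ^ 2

/-- One-variable version of the propagator. -/
noncomputable def Fprop (P t : ℝ) : ℝ := ∑' n : ℕ, B n / (P - aCoef n * t)

lemma msp_sq (lam μ : ℝ) (hlam : 0 < lam) (n : ℕ) :
    msp lam μ n ^ 2 = aCoef n * Tmap lam μ := by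
  unfold msp aCoef Tmap
  have h : ((lam / 2) ^ ((1:ℝ)/4)) ^ 2 = (lam / 2) ^ ((1:ℝ)/2) := by
    rw [← Real.rpow_natCast ((lam / 2) ^ ((1:ℝ)/4)) 2,
      ← Real.rpow_mul (by linarith : (0:ℝ) ≤ lam / 2)]
    norm_num
  rw [mul_pow, mul_pow, h]
  ring

lemma Gprop_eq (P lam μ : ℝ) (hlam : 0 < lam) :
    Gprop P lam μ = Fprop P (Tmap lam μ) := by
  unfold Gprop Fprop
  congr 1
  ext n
  rw [msp_sq lam μ hlam n]

lemma denom_bound {P : ℝ} (hP : P ≤ 0) {a y : ℝ} (ha : 0 < a) (hy : 0 < y) :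
    a * y ≤ |P - a * y| := by
  rw [abs_of_nonpos (by nlinarith)]
  nlinarith

lemma Fprop_hasDerivAt {P : ℝ} (hP : P ≤ 0) {t : ℝ} (ht : 0 < t) :
    HasDerivAt (Fprop P) (∑' n : ℕ, B n * aCoef n / (P - aCoef n * t) ^ 2) t := by
  set u : ℕ → ℝ := fun n => |B n| * (1 / (aCoef 0 * (t/2) ^ 2)) with hu_def
  have hu : Summable u := B_summable.mul_right _
  have ht2 : (0:ℝ) < t / 2 := by linarith
  refine hasDerivAt_tsum_of_isPreconnected hu isOpen_Ioi (isPreconnected_Ioi)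
    (g := fun n y => B n / (P - aCoef n * y))
    (g' := fun n y => B n * aCoef n / (P - aCoef n * y) ^ 2)
    (fun n y hy => ?_) (fun n y hy => ?_) (Set.mem_Ioi.mpr (by linarith : t/2 < t))
    ?_ (Set.mem_Ioi.mpr (by linarith : t/2 < t))
  · -- HasDerivAt for each term
    have hy' : (0:ℝ) < y := lt_trans ht2 hy
    have hne : P - aCoef n * y ≠ 0 := by
      have := aCoef_pos n; nlinarith
    have hd : HasDerivAt (fun y : ℝ => P - aCoef n * y) (-(aCoef n)) y := by
      simpa using ((hasDerivAt_id y).const_mul (aCoef n)).const_sub P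
    have := (hasDerivAt_const y (B n)).div hd hne
    refine this.congr_deriv ?_
    ring
  · -- bound
    have hy' : (0:ℝ) < y := lt_trans ht2 hy
    have hden : aCoef n * y ≤ |P - aCoef n * y| := denom_bound hP (aCoef_pos n) hy'
    have hden2 : (aCoef n * (t/2)) ^ 2 ≤ (P - aCoef n * y) ^ 2 := by
      have h1 : aCoef n * (t/2) ≤ aCoef n * y :=
        mul_le_mul_of_nonneg_left (le_of_lt hy) (aCoef_pos n).le
      have h2 : (0:ℝ) ≤ aCoef n * (t/2) := mul_nonneg (aCoef_pos n).le (by linarith)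
      calc (aCoef n * (t/2)) ^ 2 ≤ (aCoef n * y) ^ 2 := by nlinarith
        _ ≤ |P - aCoef n * y| ^ 2 := by nlinarith [abs_nonneg (P - aCoef n * y)]
        _ = (P - aCoef n * y) ^ 2 := sq_abs _
    rw [Real.norm_eq_abs, abs_div, abs_mul, abs_pow, sq_abs]
    have hpos : (0:ℝ) < (aCoef n * (t/2)) ^ 2 := pow_pos (mul_pos (aCoef_pos n) ht2) 2
    calc |B n| * |aCoef n| / (P - aCoef n * y) ^ 2
        ≤ |B n| * |aCoef n| / (aCoef n * (t/2)) ^ 2 := by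
          apply div_le_div_of_nonneg_left (by positivity) hpos hden2
      _ = |B n| * (1 / (aCoef n * (t/2) ^ 2)) := by
          rw [abs_of_pos (aCoef_pos n)]
          have hA : aCoef n ≠ 0 := (aCoef_pos n).ne'
          have hT : t / 2 ≠ 0 := ht2.ne'
          field_simp
      _ ≤ u n := by
          rw [hu_def]
          apply mul_le_mul_of_nonneg_left _ (abs_nonneg _)
          apply div_le_div_of_nonneg_left (by norm_num)
            (mul_pos (aCoef_pos 0) (pow_pos ht2 2))
          apply mul_le_mul_of_nonneg_right (aCoef_zero_le n) (by positivity)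
  ·
    -- y₀ is t here? No: hy₀ : y₀ ∈ t-set; we used (t/2 < t) twice so y₀ = t and y = t.
    apply Summable.of_norm_bounded (g := fun n => |B n| * (1 / (aCoef 0 * t))) (B_summable.mul_right _)
    intro n
    rw [Real.norm_eq_abs, abs_div]
    have hden : aCoef 0 * t ≤ |P - aCoef n * t| := by
      calc aCoef 0 * t ≤ aCoef n * t :=
            mul_le_mul_of_nonneg_right (aCoef_zero_le n) ht.le
        _ ≤ |P - aCoef n * t| := denom_bound hP (aCoef_pos n) ht
    calc |B n| / |P - aCoef n * t| ≤ |B n| / (aCoef 0 * t) := by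
          apply div_le_div_of_nonneg_left (abs_nonneg _)
            (mul_pos (aCoef_pos 0) ht) hden
      _ = |B n| * (1 / (aCoef 0 * t)) := by ring

lemma Tmap_pos {lam μ : ℝ} (hlam : 0 < lam) (hμ : 0 < μ) : 0 < Tmap lam μ := by
  unfold Tmap
  exact mul_pos (Real.rpow_pos_of_pos (by linarith : (0:ℝ) < lam / 2) ((1:ℝ)/2))
    (pow_pos hμ 2)

/-- Callan–Symanzik equation at the infrared trivial fixed point: for fixed
`P ≤ 0`, the map `(λ, μ) ↦ G(P; λ, μ)` is differentiable on `(0,∞) × (0,∞)` and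
its partial derivatives satisfy `μ ∂G/∂μ - 4λ ∂G/∂λ = 0`; i.e. the propagator is
compatible with the beta function `β(λ) = 4λ`. -/
theorem callan_symanzik_propagator (P : ℝ) (hP : P ≤ 0) :
    DifferentiableOn ℝ (fun q : ℝ × ℝ => Gprop P q.1 q.2)
      (Set.Ioi (0 : ℝ) ×ˢ Set.Ioi (0 : ℝ)) ∧
    ∀ lam μ : ℝ, 0 < lam → 0 < μ →
      ∃ Gl Gm : ℝ,
        HasDerivAt (fun l : ℝ => Gprop P l μ) Gl lam ∧
        HasDerivAt (fun m : ℝ => Gprop P lam m) Gm μ ∧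
        μ * Gm - 4 * lam * Gl = 0 := by
  have hFdiff : ∀ t : ℝ, 0 < t → DifferentiableAt ℝ (Fprop P) t :=
    fun t ht => (Fprop_hasDerivAt hP ht).differentiableAt
  constructor
  · -- joint differentiability
    have hTdiff : DifferentiableOn ℝ (fun q : ℝ × ℝ => Tmap q.1 q.2)
        (Set.Ioi (0 : ℝ) ×ˢ Set.Ioi (0 : ℝ)) := by
      intro q hq
      obtain ⟨hq1, hq2⟩ := hq
      have h1 : DifferentiableAt ℝ (fun q : ℝ × ℝ => (q.1 / 2) ^ ((1:ℝ)/2)) q := by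
        have hbase : DifferentiableAt ℝ (fun q : ℝ × ℝ => q.1 / 2) q := by
          simp only [div_eq_mul_inv]
          exact differentiableAt_fst.mul_const ((2:ℝ)⁻¹)
        have hq1' : (0:ℝ) < q.1 := Set.mem_Ioi.mp hq1
        have hx : q.1 / 2 ≠ 0 := by positivity
        exact (Real.hasDerivAt_rpow_const (p := (1:ℝ)/2)
          (Or.inl hx)).differentiableAt.comp q hbase
      have h2 : DifferentiableAt ℝ (fun q : ℝ × ℝ => q.2 ^ 2) q :=
        differentiableAt_snd.pow 2
      exact (h1.mul h2).differentiableWithinAt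
    have hcomp : DifferentiableOn ℝ (fun q : ℝ × ℝ => Fprop P (Tmap q.1 q.2))
        (Set.Ioi (0 : ℝ) ×ˢ Set.Ioi (0 : ℝ)) := by
      apply DifferentiableOn.comp (g := Fprop P) (t := Set.Ioi (0:ℝ))
      · exact fun t ht => (hFdiff t ht).differentiableWithinAt
      · exact hTdiff
      · intro q hq
        exact Set.mem_Ioi.mpr (Tmap_pos hq.1 hq.2)
    apply hcomp.congr
    intro q hq
    exact Gprop_eq P q.1 q.2 hq.1
  · intro lam μ hlam hμ
    set t := Tmap lam μ with ht_def
    have ht : 0 < t := Tmap_pos hlam hμ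
    have hF : HasDerivAt (Fprop P)
        (∑' n : ℕ, B n * aCoef n / (P - aCoef n * t) ^ 2) t := Fprop_hasDerivAt hP ht
    set F' := ∑' n : ℕ, B n * aCoef n / (P - aCoef n * t) ^ 2 with hF'_def
    -- derivative in lam
    have hTl : HasDerivAt (fun l : ℝ => Tmap l μ)
        (((1:ℝ)/2 * (lam/2) ^ ((1:ℝ)/2 - 1)) * (1/2) * μ ^ 2) lam := by
      have hbase : HasDerivAt (fun l : ℝ => l / 2) (1/2 : ℝ) lam := by
        simpa using (hasDerivAt_id lam).div_const 2
      have hrpow : HasDerivAt (fun x : ℝ => x ^ ((1:ℝ)/2))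
          ((1:ℝ)/2 * (lam/2) ^ ((1:ℝ)/2 - 1)) (lam/2) :=
        Real.hasDerivAt_rpow_const (Or.inl (by linarith : (0:ℝ) < lam/2).ne')
      exact (hrpow.comp lam hbase).mul_const (μ ^ 2)
    have hGl : HasDerivAt (fun l : ℝ => Gprop P l μ)
        (F' * (((1:ℝ)/2 * (lam/2) ^ ((1:ℝ)/2 - 1)) * (1/2) * μ ^ 2)) lam := by
      have hcomp := hF.comp lam hTl
      apply hcomp.congr_of_eventuallyEq
      have hmem : Set.Ioi (0:ℝ) ∈ nhds lam := isOpen_Ioi.mem_nhds hlam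
      filter_upwards [hmem] with l hl
      exact Gprop_eq P l μ hl
    -- derivative in μ
    have hTm : HasDerivAt (fun m : ℝ => Tmap lam m)
        ((lam/2) ^ ((1:ℝ)/2) * (2 * μ)) μ := by
      have h2 : HasDerivAt (fun m : ℝ => (lam/2) ^ ((1:ℝ)/2) * m ^ 2)
          ((lam/2) ^ ((1:ℝ)/2) * (2 * μ)) μ := by
        have := (hasDerivAt_pow 2 μ).const_mul ((lam/2) ^ ((1:ℝ)/2))
        refine this.congr_deriv ?_
        norm_num
      exact h2
    have hGm : HasDerivAt (fun m : ℝ => Gprop P lam m)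
        (F' * ((lam/2) ^ ((1:ℝ)/2) * (2 * μ))) μ := by
      have hcomp := hF.comp μ hTm
      apply hcomp.congr_of_eventuallyEq
      have hmem : Set.Ioi (0:ℝ) ∈ nhds μ := isOpen_Ioi.mem_nhds hμ
      filter_upwards [hmem] with m _
      exact Gprop_eq P lam m hlam
    refine ⟨_, _, hGl, hGm, ?_⟩
    have hkey : (lam/2) ^ ((1:ℝ)/2) * (lam/2) ^ ((1:ℝ)/2 - 1) = 1 := by
      rw [← Real.rpow_add (by linarith : (0:ℝ) < lam/2)]
      norm_num
    have hsq : ((lam/2) ^ ((1:ℝ)/2)) * ((lam/2) ^ ((1:ℝ)/2)) = lam / 2 := by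
      rw [← Real.rpow_add (by linarith : (0:ℝ) < lam/2)]
      norm_num
    set s := (lam/2) ^ ((1:ℝ)/2) with hs
    set r := (lam/2) ^ ((1:ℝ)/2 - 1) with hr
    linear_combination (-2*s*μ^2*F') * hkey + (2*r*μ^2*F') * hsq
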